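/- arXiv:0812.2599 — 2 statements merged into one kernel-verified Lean document; each statement's English description precedes it below -/
import Mathlib

section
/- Let u, u′ ∈ (ℝ∖{0})^R and v, v′ ∈ (ℝ∖{0})^C, and let E ⊆ R×C be an edge set such that the bipartite graph G = (R, C, E) is connected. If u_i·v_a = u′_i·v′_a for every (i,a) ∈ E, then u_i·v_a = u′_i·v′_a for every (i,a) ∈ R×C. In other words, the entries of a rank-1 matrix with nowhere-vanishing factors are uniquely determined on a connected component of the observation graph. -/
/-! STATEMENT 8: if the bipartite observation graph `G = (R, C, E)` is connected and
two rank-1 factorizations with nowhere vanishing factors agree on all observed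
entries, then they agree on every entry. -/

theorem rank_one_determined_on_connected_component
    {R C : Type*} [Fintype R] [Fintype C]
    (E : Set (R × C)) (u u' : R → ℝ) (v v' : C → ℝ)
    (hu : ∀ i, u i ≠ 0) (hu' : ∀ i, u' i ≠ 0)
    (hv : ∀ a, v a ≠ 0) (hv' : ∀ a, v' a ≠ 0)
    (hconn : (SimpleGraph.fromRel (fun x y : R ⊕ C =>
        ∃ p ∈ E, x = Sum.inl p.1 ∧ y = Sum.inr p.2)).Connected)
    (hagree : ∀ p ∈ E, u p.1 * v p.2 = u' p.1 * v' p.2) :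
    ∀ i a, u i * v a = u' i * v' a := by
  classical
  set G := SimpleGraph.fromRel (fun x y : R ⊕ C =>
      ∃ p ∈ E, x = Sum.inl p.1 ∧ y = Sum.inr p.2) with hG
  set f : R ⊕ C → ℝ := Sum.elim (fun i => u i / u' i) (fun a => v' a / v a) with hf
  have hadj : ∀ x y, G.Adj x y → f x = f y := by
    have base : ∀ p ∈ E, f (Sum.inl p.1) = f (Sum.inr p.2) := by
      rintro ⟨i, a⟩ hp
      have h := hagree _ hp
      simp only [hf, Sum.elim_inl, Sum.elim_inr]
      rw [div_eq_div_iff (hu' i) (hv a)]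
      nlinarith [h]
    rintro x y ⟨hne, ⟨p, hp, rfl, rfl⟩ | ⟨p, hp, rfl, rfl⟩⟩
    · exact base p hp
    · exact (base p hp).symm
  have key : ∀ x y : R ⊕ C, f x = f y := by
    intro x y
    obtain ⟨w⟩ := hconn x y
    induction w with
    | nil => rfl
    | cons h p ih => exact (hadj _ _ h).trans ih
  intro i a
  have h := key (Sum.inl i) (Sum.inr a)
  simp only [hf, Sum.elim_inl, Sum.elim_inr] at h
  rw [div_eq_div_iff (hu' i) (hv a)] at h
  nlinarith [h]
end

section
/- Let d̄ > 0, 0 ≤ Δ < d̄, ε > 0 and h ≥ 0 be real numbers. Then sup{ x ∈ [0, d̄) : h + ε·log( (d̄² − x²) / (d̄² − Δ²) ) ≥ 0 } = √( d̄² − (d̄² − Δ²)·e^{−h/ε} ). In particular, the relaxed upper bound δ̄^u(ε, α, Δ) = sup{ d(p,q) : φ^u_Δ(p,q) ≥ 0 } equals { d̄² − (d̄² − Δ²)·exp( −( H̄(p|p₀) + α·H̄(q|q₀) ) / ε ) }^{1/2} whenever the values d(p,q) sweep a dense subset of [Δ, d̄). -/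
/-! STATEMENT 11: the supremum defining the relaxed upper bound evaluates in closed
form: for `d̄ > 0`, `0 ≤ Δ < d̄`, `ε > 0`, `h ≥ 0`,
`sup{ x ∈ [0, d̄) : h + ε·log((d̄² − x²)/(d̄² − Δ²)) ≥ 0 } = √(d̄² − (d̄² − Δ²)·e^{−h/ε})`. -/

theorem sSup_relaxed_constraint_set (dbar Δ ε h : ℝ)
    (hdbar : 0 < dbar) (hΔ0 : 0 ≤ Δ) (hΔ : Δ < dbar) (hε : 0 < ε) (hh : 0 ≤ h) :
    sSup {x : ℝ | x ∈ Set.Ico 0 dbar ∧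
        0 ≤ h + ε * Real.log ((dbar ^ 2 - x ^ 2) / (dbar ^ 2 - Δ ^ 2))} =
      Real.sqrt (dbar ^ 2 - (dbar ^ 2 - Δ ^ 2) * Real.exp (-h / ε)) := by
  have hDpos : 0 < dbar ^ 2 - Δ ^ 2 := by nlinarith
  have hEpos : 0 < Real.exp (-h / ε) := Real.exp_pos _
  have hE1 : Real.exp (-h / ε) ≤ 1 := by
    apply Real.exp_le_one_iff.mpr
    apply div_nonpos_of_nonpos_of_nonneg (by linarith) hε.le
  set A := dbar ^ 2 - (dbar ^ 2 - Δ ^ 2) * Real.exp (-h / ε) with hAdef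
  have hA0 : 0 ≤ A := by rw [hAdef]; nlinarith
  have hAlt : A < dbar ^ 2 := by rw [hAdef]; nlinarith
  set M := Real.sqrt A with hMdef
  have hM0 : 0 ≤ M := Real.sqrt_nonneg _
  have hM2 : M ^ 2 = A := Real.sq_sqrt hA0
  have hMlt : M < dbar := (Real.sqrt_lt' hdbar).mpr hAlt
  have hset : {x : ℝ | x ∈ Set.Ico 0 dbar ∧
      0 ≤ h + ε * Real.log ((dbar ^ 2 - x ^ 2) / (dbar ^ 2 - Δ ^ 2))} = Set.Icc 0 M := by
    ext x
    simp only [Set.mem_setOf_eq, Set.mem_Ico, Set.mem_Icc]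
    constructor
    · rintro ⟨⟨hx0, hxd⟩, hineq⟩
      refine ⟨hx0, ?_⟩
      have hpos : 0 < dbar ^ 2 - x ^ 2 := by nlinarith
      have hratio : 0 < (dbar ^ 2 - x ^ 2) / (dbar ^ 2 - Δ ^ 2) := div_pos hpos hDpos
      have hlog : -h / ε ≤ Real.log ((dbar ^ 2 - x ^ 2) / (dbar ^ 2 - Δ ^ 2)) := by
        rw [div_le_iff₀ hε]
        nlinarith [hineq]
      have hexp : Real.exp (-h / ε) ≤ (dbar ^ 2 - x ^ 2) / (dbar ^ 2 - Δ ^ 2) :=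
        (Real.le_log_iff_exp_le hratio).mp hlog
      have hx2 : x ^ 2 ≤ A := by
        rw [le_div_iff₀ hDpos] at hexp
        rw [hAdef]; nlinarith
      have := Real.sqrt_le_sqrt hx2
      rwa [Real.sqrt_sq hx0] at this
    · rintro ⟨hx0, hxM⟩
      have hx2 : x ^ 2 ≤ A := by
        have := pow_le_pow_left₀ hx0 hxM 2
        linarith [hM2 ▸ this]
      refine ⟨⟨hx0, lt_of_le_of_lt hxM hMlt⟩, ?_⟩
      have hexp : Real.exp (-h / ε) ≤ (dbar ^ 2 - x ^ 2) / (dbar ^ 2 - Δ ^ 2) := by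
        rw [le_div_iff₀ hDpos]
        rw [hAdef] at hx2
        linarith
      have hpos : 0 < dbar ^ 2 - x ^ 2 := by nlinarith
      have hratio : 0 < (dbar ^ 2 - x ^ 2) / (dbar ^ 2 - Δ ^ 2) := div_pos hpos hDpos
      have hlog : -h / ε ≤ Real.log ((dbar ^ 2 - x ^ 2) / (dbar ^ 2 - Δ ^ 2)) :=
        (Real.le_log_iff_exp_le hratio).mpr hexp
      have key : ε * (-h / ε) = -h := by field_simp
      have := mul_le_mul_of_nonneg_left hlog hε.le
      rw [key] at this
      linarith
  rw [hset, csSup_Icc hM0]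
end
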